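/- Let ε ∈ (0,1] and let z ∈ [0,1]^d with V_z ≥ ε. Then the Lebesgue measure of A_ε(z) is given exactly by λ^d(A_ε(z)) = V_z − (V_z − ε) · ∑_{k=0}^{d−1} (−ln(1 − ε/V_z))^k / k!. -/

import Mathlib

open Finset MeasureTheory

noncomputable def starVol {d : ℕ} (y : Fin d → ℝ) : ℝ := ∏ j, y j

/-- The set `A_ε(z) = {x ∈ [0,1]^d : x ≤ z, V_z - V_x ≤ ε}`. -/
def Aeps (d : ℕ) (ε : ℝ) (z : Fin d → ℝ) : Set (Fin d → ℝ) :=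
  {x | (∀ j, x j ∈ Set.Icc (0 : ℝ) 1) ∧ (∀ j, x j ≤ z j) ∧ starVol z - starVol x ≤ ε}

/-- For `ε ∈ (0,1]` and `z ∈ [0,1]^d` with `V_z ≥ ε`,
`λ^d(A_ε(z)) = V_z - (V_z - ε)·∑_{k=0}^{d-1} (-ln(1 - ε/V_z))^k / k!`. -/
def Sset (d : ℕ) (t : ℝ) : Set (Fin d → ℝ) :=
  {u | (∀ j, u j ∈ Set.Icc (0:ℝ) 1) ∧ t ≤ ∏ j, u j}

lemma measurableSet_box (d : ℕ) :
    MeasurableSet {u : Fin d → ℝ | ∀ j, u j ∈ Set.Icc (0:ℝ) 1} := by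
  rw [show {u : Fin d → ℝ | ∀ j, u j ∈ Set.Icc (0:ℝ) 1}
      = Set.pi Set.univ (fun _ => Set.Icc (0:ℝ) 1) by
    ext x; simp [Set.mem_pi, Pi.le_def, forall_and]]
  exact MeasurableSet.univ_pi fun _ => measurableSet_Icc

lemma vol_Sset : ∀ (d : ℕ) (t : ℝ), 0 < t → t ≤ 1 →
    volume (Sset d t) = ENNReal.ofReal
      (1 - t * ∑ k ∈ Finset.range d, (-Real.log t) ^ k / (k.factorial : ℝ)) := by
  intro d
  induction d with
  | zero =>
    intro t ht0 ht1
    have h : Sset 0 t = Set.univ := by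
      ext u
      simp only [Sset, Set.mem_setOf_eq, Set.mem_univ, iff_true]
      exact ⟨fun j => j.elim0, by simpa using ht1⟩
    rw [h, show (Set.univ : Set (Fin 0 → ℝ)) = Set.pi Set.univ (fun _ => Set.univ) by simp,
      volume_pi_pi]
    simp
  | succ d ih =>
    intro t ht0 ht1
    set L : ℝ → ℝ := fun x => Real.log x - Real.log t with hL
    set g : ℝ → ℝ :=
      fun x => 1 - (t/x) * ∑ k ∈ Finset.range d, (L x) ^ k / (k.factorial : ℝ) with hg
    set T : Set (ℝ × (Fin d → ℝ)) :=
      {p | p.1 ∈ Set.Icc (0:ℝ) 1 ∧ (∀ j, p.2 j ∈ Set.Icc (0:ℝ) 1) ∧ t ≤ p.1 * ∏ j, p.2 j}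
      with hTdef
    have hT : MeasurableSet T := by
      refine MeasurableSet.inter (measurable_fst measurableSet_Icc) (MeasurableSet.inter ?_ ?_)
      · exact measurable_snd (measurableSet_box d)
      · exact measurableSet_le measurable_const
          (measurable_fst.mul (Finset.measurable_prod _
            fun j _ => (measurable_pi_apply j).comp measurable_snd))
    have hpre : Sset (d+1) t
        = (MeasurableEquiv.piFinSuccAbove (fun _ : Fin (d+1) => ℝ) 0) ⁻¹' T := by
      ext x
      simp only [Sset, Set.mem_setOf_eq, Set.mem_preimage,
        MeasurableEquiv.piFinSuccAbove_apply, hTdef]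
      rw [Fin.forall_fin_succ, Fin.prod_univ_succ]
      simp [Fin.zero_succAbove, Fin.insertNthEquiv, Fin.removeNth]
      tauto
    have hmp := MeasureTheory.measurePreserving_piFinSuccAbove
      (fun _ : Fin (d+1) => (volume : Measure ℝ)) 0
    have hvol : volume (Sset (d+1) t)
        = ((volume : Measure ℝ).prod (Measure.pi fun _ : Fin d => volume)) T := by
      rw [hpre, volume_pi]
      exact hmp.measure_preimage hT.nullMeasurableSet
    rw [hvol, Measure.prod_apply hT]
    have hslice : ∀ x : ℝ, (Measure.pi fun _ : Fin d => (volume : Measure ℝ)) (Prod.mk x ⁻¹' T)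
        = Set.indicator (Set.Icc t 1) (fun x => ENNReal.ofReal (g x)) x := by
      intro x
      by_cases hx : x ∈ Set.Icc t 1
      · have hx0 : 0 < x := lt_of_lt_of_le ht0 hx.1
        have hpre2 : Prod.mk x ⁻¹' T = Sset d (t/x) := by
          ext y
          simp only [Set.mem_preimage, hTdef, Set.mem_setOf_eq, Sset]
          constructor
          · rintro ⟨_, hy, hle⟩
            refine ⟨hy, (div_le_iff₀ hx0).2 ?_⟩
            rw [mul_comm]; exact hle
          · rintro ⟨hy, hle⟩
            refine ⟨⟨hx0.le, hx.2⟩, hy, ?_⟩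
            have := (div_le_iff₀ hx0).1 hle
            rw [mul_comm] at this; exact this
        rw [hpre2, ← volume_pi, ih (t/x) (div_pos ht0 hx0) ((div_le_one hx0).2 hx.1),
          Set.indicator_of_mem hx]
        congr 1
        have hlog : -Real.log (t/x) = L x := by
          rw [Real.log_div ht0.ne' hx0.ne', hL]; ring
        rw [hlog]
      · rw [Set.indicator_of_notMem hx]
        have hempty : Prod.mk x ⁻¹' T = ∅ := by
          ext y
          simp only [Set.mem_preimage, hTdef, Set.mem_setOf_eq, Set.mem_empty_iff_false,
            iff_false, not_and]
          intro hx01 hy hle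
          rw [Set.mem_Icc, not_and_or, not_le, not_le] at hx
          rcases hx with hlt | hgt
          · have hp1 : ∏ j, y j ≤ 1 :=
              Finset.prod_le_one (fun j _ => (hy j).1) (fun j _ => (hy j).2)
            nlinarith [hx01.1, hx01.2]
          · exact absurd hx01.2 (not_le.2 hgt)
        rw [hempty]; simp
    rw [lintegral_congr hslice, lintegral_indicator measurableSet_Icc]
    have hsub : Set.Icc t 1 ⊆ ({0}ᶜ : Set ℝ) :=
      fun x hx => (ne_of_gt (lt_of_lt_of_le ht0 hx.1))
    have hcont : ContinuousOn g (Set.Icc t 1) := by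
      apply ContinuousOn.sub continuousOn_const
      apply ContinuousOn.mul
      · exact continuousOn_const.div continuousOn_id
          (fun x hx => (ne_of_gt (lt_of_lt_of_le ht0 hx.1)))
      · refine continuousOn_finset_sum _ fun k _ => ContinuousOn.div_const ?_ _
        exact ((Real.continuousOn_log.mono hsub).sub continuousOn_const).pow k
    have hint : IntegrableOn g (Set.Icc t 1) := hcont.integrableOn_Icc
    have hnn : ∀ x ∈ Set.Icc t 1, 0 ≤ g x := by
      intro x hx
      have hx0 : 0 < x := lt_of_lt_of_le ht0 hx.1
      have hs : 0 ≤ L x := by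
        rw [hL]; simp only [sub_nonneg]
        exact Real.log_le_log ht0 hx.1
      have h1 : ∑ k ∈ Finset.range d, (L x) ^ k / (k.factorial : ℝ) ≤ Real.exp (L x) :=
        Real.sum_le_exp_of_nonneg hs d
      have h2 : Real.exp (L x) = x / t := by
        rw [hL, Real.exp_sub, Real.exp_log hx0, Real.exp_log ht0]
      have h3 : (t/x) * ∑ k ∈ Finset.range d, (L x) ^ k / (k.factorial : ℝ) ≤ (t/x) * (x/t) :=
        mul_le_mul_of_nonneg_left (h2 ▸ h1) (by positivity)
      have h4 : (t/x) * (x/t) = 1 := by field_simp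
      rw [hg]; dsimp only; linarith
    rw [← ofReal_integral_eq_lintegral_ofReal hint
      ((ae_restrict_iff' measurableSet_Icc).2 (MeasureTheory.ae_of_all _ hnn))]
    rw [MeasureTheory.integral_Icc_eq_integral_Ioc, ← intervalIntegral.integral_of_le ht1]
    set F : ℝ → ℝ :=
      fun x => x - t * ∑ k ∈ Finset.range d, (L x) ^ (k+1) / ((k+1).factorial : ℝ) with hF
    have hderiv : ∀ x ∈ Set.uIcc t 1, HasDerivAt F (g x) x := by
      intro x hx
      rw [Set.uIcc_of_le ht1] at hx
      have hx0 : 0 < x := lt_of_lt_of_le ht0 hx.1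
      have hlog : HasDerivAt (fun y => Real.log y - Real.log t) x⁻¹ x :=
        (Real.hasDerivAt_log hx0.ne').sub_const _
      have hterm : ∀ k : ℕ,
          HasDerivAt (fun y => (Real.log y - Real.log t) ^ (k+1) / ((k+1).factorial : ℝ))
            ((((k:ℝ)+1) * (L x) ^ k * x⁻¹) / ((k+1).factorial : ℝ)) x := by
        intro k
        have h := (hlog.pow (k+1)).div_const (((k+1).factorial : ℝ))
        simpa [hL] using h
      have hsum : HasDerivAt
          (fun y => ∑ k ∈ Finset.range d, (Real.log y - Real.log t) ^ (k+1) / ((k+1).factorial : ℝ))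
          (∑ k ∈ Finset.range d, (((k:ℝ)+1) * (L x) ^ k * x⁻¹) / ((k+1).factorial : ℝ)) x :=
        HasDerivAt.fun_sum fun k _ => hterm k
      have hFd : HasDerivAt F
          (1 - t * ∑ k ∈ Finset.range d, (((k:ℝ)+1) * (L x) ^ k * x⁻¹) / ((k+1).factorial : ℝ)) x :=
        (hasDerivAt_id x).sub (hsum.const_mul t)
      convert hFd using 1
      rw [hg]
      dsimp only
      have hterm2 : ∀ k : ℕ, (((k:ℝ)+1) * (L x) ^ k * x⁻¹) / ((k+1).factorial : ℝ)
          = x⁻¹ * ((L x) ^ k / (k.factorial : ℝ)) := by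
        intro k
        rw [Nat.factorial_succ]
        have hk : (k.factorial : ℝ) ≠ 0 := Nat.cast_ne_zero.2 k.factorial_ne_zero
        push_cast
        field_simp
      rw [Finset.sum_congr rfl (fun k _ => hterm2 k), ← Finset.mul_sum, div_eq_mul_inv]
      ring
    have hintg : IntervalIntegrable g volume t 1 :=
      (by rw [Set.uIcc_of_le ht1]; exact hcont : ContinuousOn g (Set.uIcc t 1)).intervalIntegrable
    rw [intervalIntegral.integral_eq_sub_of_hasDerivAt hderiv hintg]
    congr 1
    have hFt : L t = 0 := by rw [hL]; ring
    have hF1 : L 1 = -Real.log t := by rw [hL]; simp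
    rw [hF]
    dsimp only
    rw [hFt, hF1, Finset.sum_range_succ']
    simp only [zero_pow (Nat.succ_ne_zero _), pow_zero, Nat.factorial_zero, Nat.cast_one,
      div_one, zero_div]
    rw [Finset.sum_const_zero]
    ring


lemma vol_Sset' (d : ℕ) (t : ℝ) (ht0 : 0 ≤ t) (ht1 : t ≤ 1) :
    volume (Sset d t) = ENNReal.ofReal
      (1 - t * ∑ k ∈ Finset.range d, (-Real.log t) ^ k / (k.factorial : ℝ)) := by
  rcases eq_or_lt_of_le ht0 with h | h
  · rw [← h]
    have hS : Sset d 0 = Set.pi Set.univ fun _ : Fin d => Set.Icc (0:ℝ) 1 := by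
      ext u
      simp only [Sset, Set.mem_setOf_eq, Set.mem_pi, Set.mem_univ, forall_true_left]
      constructor
      · exact fun ⟨h1, _⟩ j => h1 j
      · exact fun h1 => ⟨h1, Finset.prod_nonneg fun j _ => (h1 j).1⟩
    rw [hS, volume_pi_pi]
    simp
  · exact vol_Sset d t h ht1

theorem stmt15 (d : ℕ) (hd : 0 < d) (ε : ℝ) (hε : ε ∈ Set.Ioc (0 : ℝ) 1)
    (z : Fin d → ℝ) (hz : ∀ j, z j ∈ Set.Icc (0 : ℝ) 1) (hV : ε ≤ starVol z) :
    volume (Aeps d ε z) =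
      ENNReal.ofReal (starVol z - (starVol z - ε) *
        ∑ k ∈ Finset.range d,
          (-Real.log (1 - ε / starVol z)) ^ k / (k.factorial : ℝ)) := by
  have hV0 : (0:ℝ) < starVol z := lt_of_lt_of_le hε.1 hV
  have hzj : ∀ j, 0 < z j := by
    intro j
    rcases lt_or_eq_of_le (hz j).1 with h | h
    · exact h
    · exfalso
      have h0 : starVol z = 0 := Finset.prod_eq_zero (Finset.mem_univ j) h.symm
      rw [h0] at hV0; exact lt_irrefl 0 hV0
  have ht0 : 0 ≤ 1 - ε / starVol z := by
    have := (div_le_one hV0).2 hV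
    linarith
  have ht1 : 1 - ε / starVol z ≤ 1 := by
    have := div_pos hε.1 hV0
    linarith
  set f : (Fin d → ℝ) →ₗ[ℝ] (Fin d → ℝ) := Matrix.toLin' (Matrix.diagonal z) with hfdef
  have hf_apply : ∀ (u : Fin d → ℝ) (j : Fin d), f u j = z j * u j := by
    intro u j
    rw [hfdef, Matrix.toLin'_apply, Matrix.mulVec_diagonal]
  have himg : Aeps d ε z = ⇑f '' Sset d (1 - ε / starVol z) := by
    ext x
    constructor
    · rintro ⟨hx01, hxz, hle⟩
      refine ⟨fun j => x j / z j, ⟨fun j => ⟨div_nonneg (hx01 j).1 (hzj j).le,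
        (div_le_one (hzj j)).2 (hxz j)⟩, ?_⟩, ?_⟩
      · have hprod : ∏ j, x j / z j = starVol x / starVol z := by
          rw [starVol, starVol, Finset.prod_div_distrib]
        rw [hprod]
        have h5 : (1 - ε / starVol z) * starVol z = starVol z - ε := by field_simp
        rw [le_div_iff₀ hV0, h5]
        linarith
      · funext j
        rw [hf_apply]
        have := (hzj j).ne'
        field_simp
    · rintro ⟨u, ⟨hu01, hut⟩, rfl⟩
      have hprod : starVol (⇑f u) = starVol z * ∏ j, u j := by
        calc starVol (⇑f u) = ∏ j, z j * u j :=
              Finset.prod_congr rfl fun j _ => hf_apply u j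
          _ = (∏ j, z j) * ∏ j, u j := Finset.prod_mul_distrib
      refine ⟨?_, ?_, ?_⟩
      · intro j
        rw [hf_apply]
        refine ⟨mul_nonneg (hzj j).le (hu01 j).1, ?_⟩
        nlinarith [(hz j).1, (hz j).2, (hu01 j).1, (hu01 j).2]
      · intro j
        rw [hf_apply]
        exact mul_le_of_le_one_right (hzj j).le (hu01 j).2
      · rw [hprod]
        have h2 : starVol z * (1 - ε / starVol z) = starVol z - ε := by field_simp
        nlinarith [mul_le_mul_of_nonneg_left hut hV0.le]
  rw [himg, MeasureTheory.Measure.addHaar_image_linearMap,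
    vol_Sset' d _ ht0 ht1]
  have hdet : |LinearMap.det f| = starVol z := by
    rw [hfdef, LinearMap.det_toLin', Matrix.det_diagonal]
    exact abs_of_nonneg (Finset.prod_nonneg fun j _ => (hzj j).le)
  rw [hdet, ← ENNReal.ofReal_mul hV0.le]
  congr 1
  have hVt : starVol z * (1 - ε / starVol z) = starVol z - ε := by field_simp
  rw [show starVol z * (1 - (1 - ε / starVol z) *
        ∑ k ∈ Finset.range d, (-Real.log (1 - ε / starVol z)) ^ k / (k.factorial : ℝ))
      = starVol z - (starVol z * (1 - ε / starVol z)) *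
        ∑ k ∈ Finset.range d, (-Real.log (1 - ε / starVol z)) ^ k / (k.factorial : ℝ) by ring,
    hVt]
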